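/- Let X and Y be locally compact Hausdorff spaces, let E and F be real Banach spaces with E nontrivial, and let T : C₀(X,E) → C₀(Y,F) be a linear isometry. Then for every x ∈ X the set Q_x is nonempty; that is, there exist ν in the unit sphere of E*, a point y ∈ Y, and μ in the unit sphere of F* such that S_{x,ν} is nonempty and μ(Tf(y)) = 1 for every f ∈ S_{x,ν}. -/

import Mathlib

open ZeroAtInfty

variable {X Y E F : Type*}
  [TopologicalSpace X] [LocallyCompactSpace X] [T2Space X]
  [TopologicalSpace Y] [LocallyCompactSpace Y] [T2Space Y]
  [NormedAddCommGroup E] [NormedSpace ℝ E] [CompleteSpace E]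
  [NormedAddCommGroup F] [NormedSpace ℝ F] [CompleteSpace F]

/-- `S_{x,ν} = {f ∈ C₀(X,E) : ν(f(x)) = ‖f‖ = 1}`. -/
def Sset (x : X) (ν : E →L[ℝ] ℝ) : Set C₀(X, E) :=
  {f | ν (f x) = 1 ∧ ‖f‖ = 1}

/-- `R_{y,μ} = {g ∈ C₀(Y,F) : μ(g(y)) = ‖g‖ = 1}`. -/
def Rset (y : Y) (μ : F →L[ℝ] ℝ) : Set C₀(Y, F) :=
  {g | μ (g y) = 1 ∧ ‖g‖ = 1}

/-- `Q_{x,ν}`: the set of `y ∈ Y` such that `T(S_{x,ν}) ⊆ R_{y,μ}` for some `μ` in the unit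
sphere of `F*`, when `S_{x,ν} ≠ ∅`; empty otherwise. -/
def Qnu (T : C₀(X, E) →ₗᵢ[ℝ] C₀(Y, F)) (x : X) (ν : E →L[ℝ] ℝ) : Set Y :=
  {y | (Sset x ν).Nonempty ∧
    ∃ μ : F →L[ℝ] ℝ, ‖μ‖ = 1 ∧ ∀ f ∈ Sset x ν, T f ∈ Rset y μ}

/-- `Q_x = ⋃_{ν ∈ S_{E*}} Q_{x,ν}`. -/
def Qset (T : C₀(X, E) →ₗᵢ[ℝ] C₀(Y, F)) (x : X) : Set Y :=
  ⋃ ν ∈ {ν : E →L[ℝ] ℝ | ‖ν‖ = 1}, Qnu T x ν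

section Aux

variable {Z G : Type*} [TopologicalSpace Z] [NormedAddCommGroup G] [NormedSpace ℝ G]

lemma C0_norm_apply_le' (g : C₀(Z, G)) (y : Z) : ‖g y‖ ≤ ‖g‖ := by
  rw [← ZeroAtInftyContinuousMap.norm_toBCF_eq_norm]
  exact g.toBCF.norm_coe_le_norm y

lemma C0_norm_le' (g : C₀(Z, G)) {C : ℝ} (h0 : 0 ≤ C) (h : ∀ y, ‖g y‖ ≤ C) : ‖g‖ ≤ C := by
  rw [← ZeroAtInftyContinuousMap.norm_toBCF_eq_norm]
  exact (BoundedContinuousFunction.norm_le h0).mpr h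

lemma C0_level_compact' (g : C₀(Z, G)) {c : ℝ} (hc : 0 < c) : IsCompact {y | c ≤ ‖g y‖} := by
  have h := zero_at_infty g (Metric.ball_mem_nhds (0 : G) hc)
  rw [Filter.mem_map, Filter.mem_cocompact] at h
  obtain ⟨K, hK, hKsub⟩ := h
  refine hK.of_isClosed_subset
    (isClosed_le continuous_const (continuous_norm.comp g.continuous)) ?_
  intro y hy
  by_contra hyK
  have := hKsub hyK
  simp only [Set.mem_preimage, Metric.mem_ball, dist_zero_right] at this
  exact absurd hy (not_le.mpr this)

lemma C0_exists_norm_eq' (g : C₀(Z, G)) (hg : ‖g‖ = 1) : ∃ y, ‖g y‖ = 1 := by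
  have hA : IsCompact {y | (1:ℝ)/2 ≤ ‖g y‖} := C0_level_compact' g (by norm_num)
  have hne : {y | (1:ℝ)/2 ≤ ‖g y‖}.Nonempty := by
    have hnall : ¬ ∀ y, ‖g y‖ ≤ 1/2 := fun hall => by
      have h2 := C0_norm_le' g (by norm_num) hall
      rw [hg] at h2; linarith
    push_neg at hnall
    obtain ⟨y, hy⟩ := hnall
    exact ⟨y, hy.le⟩
  obtain ⟨y0, hy0, hmax⟩ := hA.exists_isMaxOn hne
    ((continuous_norm.comp g.continuous).continuousOn)
  refine ⟨y0, le_antisymm (hg ▸ C0_norm_apply_le' g y0) ?_⟩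
  rw [← hg]
  refine C0_norm_le' g (le_trans (by norm_num) hy0) fun y => ?_
  by_cases hy : (1:ℝ)/2 ≤ ‖g y‖
  · exact hmax hy
  · exact le_trans (le_of_lt (not_le.mp hy)) hy0

lemma exists_support_functional' (V : Set G) (hV : Convex ℝ V) (hVn : V.Nonempty)
    (hVs : ∀ v ∈ V, ‖v‖ = 1) :
    ∃ μ : G →L[ℝ] ℝ, ‖μ‖ = 1 ∧ ∀ v ∈ V, μ v = 1 := by
  have hdisj : Disjoint (Metric.ball (0 : G) 1) V := by
    rw [Set.disjoint_left]
    intro a ha haV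
    rw [Metric.mem_ball, dist_zero_right] at ha
    rw [hVs a haV] at ha
    exact lt_irrefl _ ha
  obtain ⟨Λ, u, hball, hVle⟩ :=
    geometric_hahn_banach_open (convex_ball (0 : G) 1) Metric.isOpen_ball hV hdisj
  obtain ⟨v0, hv0⟩ := hVn
  have hu0 : 0 < u := by
    have := hball 0 (by simp)
    simpa using this
  have hA : ∀ z : G, Λ z ≤ u * ‖z‖ := by
    intro z
    rcases eq_or_ne z 0 with rfl | hz
    · simp
    by_contra hcon
    push_neg at hcon
    have hΛz : 0 < Λ z := lt_of_le_of_lt (by positivity) hcon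
    set r : ℝ := u * ‖z‖ / Λ z with hr
    have hr1 : r < 1 := by
      rw [hr, div_lt_one hΛz]; exact hcon
    have hr0 : 0 ≤ r := by positivity
    set t : ℝ := (r + 1) / 2 with ht
    have htr : r < t := by rw [ht]; linarith
    have ht1 : t < 1 := by rw [ht]; linarith
    have ht0 : 0 < t := by rw [ht]; linarith
    have hz0 : (0:ℝ) < ‖z‖ := norm_pos_iff.mpr hz
    have hw : ((t * ‖z‖⁻¹) • z) ∈ Metric.ball (0 : G) 1 := by
      rw [Metric.mem_ball, dist_zero_right, norm_smul]
      have : ‖t * ‖z‖⁻¹‖ = t * ‖z‖⁻¹ := abs_of_pos (by positivity)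
      rw [this, mul_assoc, inv_mul_cancel₀ (norm_ne_zero_iff.mpr hz), mul_one]
      exact ht1
    have := hball _ hw
    rw [map_smul, smul_eq_mul] at this
    have h2 : t * Λ z < u * ‖z‖ := by
      calc t * Λ z = (t * ‖z‖⁻¹ * Λ z) * ‖z‖ := by field_simp
        _ < u * ‖z‖ := mul_lt_mul_of_pos_right this hz0
    have : t < r := by
      rw [hr, lt_div_iff₀ hΛz]; exact h2
    linarith
  have hΛnorm : ‖Λ‖ ≤ u := by
    refine Λ.opNorm_le_bound hu0.le fun z => ?_
    rw [Real.norm_eq_abs, abs_le]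
    constructor
    · have := hA (-z); rw [map_neg] at this; simp at this; linarith [this]
    · exact hA z
  have huΛ : u ≤ ‖Λ‖ := by
    have h1 : Λ v0 ≤ ‖Λ‖ * ‖v0‖ := le_trans (le_abs_self _) (Λ.le_opNorm v0)
    rw [hVs v0 hv0, mul_one] at h1
    exact le_trans (hVle v0 hv0) h1
  have hΛu : ‖Λ‖ = u := le_antisymm hΛnorm huΛ
  have hΛne : ‖Λ‖ ≠ 0 := by rw [hΛu]; exact hu0.ne'
  refine ⟨‖Λ‖⁻¹ • Λ, ?_, ?_⟩
  · exact (norm_smul (‖Λ‖⁻¹) Λ).trans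
      (by rw [norm_inv, norm_norm]; exact inv_mul_cancel₀ hΛne)
  · intro v hv
    have hΛv : Λ v = u := by
      have h1 : Λ v ≤ ‖Λ‖ * ‖v‖ := le_trans (le_abs_self _) (Λ.le_opNorm v)
      rw [hVs v hv, mul_one, hΛu] at h1
      exact le_antisymm h1 (hVle v hv)
    rw [ContinuousLinearMap.smul_apply, hΛv, smul_eq_mul, hΛu,
      inv_mul_cancel₀ hu0.ne']

end Aux

lemma one_le_norm_of_Sval {x : X} {ν : E →L[ℝ] ℝ} (hν : ‖ν‖ = 1) {f : C₀(X, E)}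
    (h : ν (f x) = 1) : 1 ≤ ‖f‖ := by
  have h1 : ν (f x) ≤ ‖ν‖ * ‖f x‖ := le_trans (le_abs_self _) (ν.le_opNorm (f x))
  rw [h, hν, one_mul] at h1
  exact le_trans h1 (C0_norm_apply_le' f x)

lemma Sset_comb_mem {x : X} {ν : E →L[ℝ] ℝ} (hν : ‖ν‖ = 1) {f1 f2 : C₀(X, E)}
    (h1 : f1 ∈ Sset x ν) (h2 : f2 ∈ Sset x ν) {a b : ℝ} (ha : 0 ≤ a) (hb : 0 ≤ b)
    (hab : a + b = 1) : a • f1 + b • f2 ∈ Sset x ν := by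
  obtain ⟨h1v, h1n⟩ := h1
  obtain ⟨h2v, h2n⟩ := h2
  have happ : (a • f1 + b • f2) x = a • f1 x + b • f2 x := by
    simp
  have hval : ν ((a • f1 + b • f2) x) = 1 := by
    rw [happ, map_add, map_smul, map_smul, smul_eq_mul, smul_eq_mul, h1v, h2v]
    simpa using hab
  refine ⟨hval, le_antisymm ?_ (one_le_norm_of_Sval hν hval)⟩
  calc ‖a • f1 + b • f2‖ ≤ ‖a • f1‖ + ‖b • f2‖ := norm_add_le _ _
    _ = a + b := by
        rw [norm_smul, norm_smul, h1n, h2n, Real.norm_eq_abs, Real.norm_eq_abs,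
          abs_of_nonneg ha, abs_of_nonneg hb, mul_one, mul_one]
    _ = 1 := hab

/-- Claim 1: `Q_x` is nonempty for all `x` in `X`. -/
theorem Qset_nonempty [Nontrivial E] (T : C₀(X, E) →ₗᵢ[ℝ] C₀(Y, F)) (x : X) :
    (Qset T x).Nonempty ∧
    ∃ ν : E →L[ℝ] ℝ, ‖ν‖ = 1 ∧ ∃ y : Y, ∃ μ : F →L[ℝ] ℝ, ‖μ‖ = 1 ∧
      (Sset x ν).Nonempty ∧ ∀ f ∈ Sset x ν, μ (T f y) = 1 := by
  -- choose a unit vector and a supporting functional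
  obtain ⟨e0, he0⟩ := exists_ne (0 : E)
  set e : E := ‖e0‖⁻¹ • e0 with he
  have he1 : ‖e‖ = 1 := norm_smul_inv_norm he0
  have hene : e ≠ 0 := by
    intro h; rw [h, norm_zero] at he1; norm_num at he1
  obtain ⟨ν, hν1, hνe⟩ := exists_dual_vector ℝ e (norm_ne_zero_iff.mpr hene)
  have hνe1 : ν e = 1 := by rw [he1] at hνe; exact_mod_cast hνe
  -- a bump function witnessing `Sset x ν ≠ ∅`
  obtain ⟨φ, hφ1, -, hφsupp, hφmem⟩ :=
    exists_continuous_one_zero_of_isCompact (isCompact_singleton : IsCompact {x})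
      isClosed_empty (Set.disjoint_empty _)
  have hcs : HasCompactSupport fun z => φ z • e := hφsupp.smul_right
  set f0 : C₀(X, E) :=
    ⟨⟨fun z => φ z • e, φ.continuous.smul continuous_const⟩, hcs.is_zero_at_infty⟩ with hf0
  have hf0x : ν (f0 x) = 1 := by
    have hφx : φ x = 1 := hφ1 rfl
    show ν (φ x • e) = 1
    rw [hφx, one_smul, hνe1]
  have hf0S : f0 ∈ Sset x ν := by
    refine ⟨hf0x, le_antisymm ?_ (one_le_norm_of_Sval hν1 hf0x)⟩
    refine C0_norm_le' f0 zero_le_one fun z => ?_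
    show ‖φ z • e‖ ≤ 1
    rw [norm_smul, he1, mul_one, Real.norm_eq_abs,
      abs_of_nonneg (hφmem z).1]
    exact (hφmem z).2
  have hSne : (Sset x ν).Nonempty := ⟨f0, hf0S⟩
  -- norms of images
  have hTnorm : ∀ f ∈ Sset x ν, ‖T f‖ = 1 := fun f hf => by
    rw [T.norm_map]; exact hf.2
  -- a common norm-attaining point via compactness and directedness
  haveI : Nonempty (Sset x ν) := ⟨⟨f0, hf0S⟩⟩
  set K : Sset x ν → Set Y := fun f => {y | 1 ≤ ‖T f.1 y‖} with hK
  have hKsub : ∀ (f g : Sset x ν) (hc : (2⁻¹ : ℝ) • f.1 + (2⁻¹ : ℝ) • g.1 ∈ Sset x ν),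
      K ⟨_, hc⟩ ⊆ K f ∩ K g := by
    intro f g hc
    intro y hy
    have hTy : (1 : ℝ) ≤ ‖T ((2⁻¹ : ℝ) • f.1 + (2⁻¹ : ℝ) • g.1) y‖ := hy
    have hexp : T ((2⁻¹ : ℝ) • f.1 + (2⁻¹ : ℝ) • g.1) y = (2⁻¹ : ℝ) • (T f.1 y) + (2⁻¹ : ℝ) • (T g.1 y) := by
      rw [map_add, map_smul, map_smul]
      simp
    rw [hexp] at hTy
    have hfle : ‖T f.1 y‖ ≤ 1 := le_trans (C0_norm_apply_le' _ y) (hTnorm f.1 f.2).le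
    have hgle : ‖T g.1 y‖ ≤ 1 := le_trans (C0_norm_apply_le' _ y) (hTnorm g.1 g.2).le
    have htri : ‖(2⁻¹ : ℝ) • (T f.1 y) + (2⁻¹ : ℝ) • (T g.1 y)‖
        ≤ 2⁻¹ * ‖T f.1 y‖ + 2⁻¹ * ‖T g.1 y‖ := by
      refine le_trans (norm_add_le _ _) ?_
      rw [norm_smul, norm_smul]
      norm_num
    constructor
    · show (1:ℝ) ≤ ‖T f.1 y‖
      nlinarith
    · show (1:ℝ) ≤ ‖T g.1 y‖
      nlinarith
  have hdir : Directed (· ⊇ ·) K := by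
    intro f g
    have hc : (2⁻¹ : ℝ) • f.1 + (2⁻¹ : ℝ) • g.1 ∈ Sset x ν :=
      Sset_comb_mem hν1 f.2 g.2 (by norm_num) (by norm_num) (by norm_num)
    refine ⟨⟨_, hc⟩, ?_, ?_⟩
    · exact fun y hy => ((hKsub f g hc) hy).1
    · exact fun y hy => ((hKsub f g hc) hy).2
  have hKne : ∀ f : Sset x ν, (K f).Nonempty := by
    intro f
    obtain ⟨y, hy⟩ := C0_exists_norm_eq' (T f.1) (hTnorm f.1 f.2)
    exact ⟨y, hy.ge⟩
  have hKcpt : ∀ f : Sset x ν, IsCompact (K f) :=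
    fun f => C0_level_compact' (T f.1) one_pos
  have hKcl : ∀ f : Sset x ν, IsClosed (K f) :=
    fun f => isClosed_le continuous_const (continuous_norm.comp (T f.1).continuous)
  obtain ⟨y0, hy0⟩ :=
    IsCompact.nonempty_iInter_of_directed_nonempty_isCompact_isClosed K hdir hKne hKcpt hKcl
  have hy0K : ∀ f : Sset x ν, y0 ∈ K f := by
    intro f; exact Set.mem_iInter.mp hy0 f
  have hy0norm : ∀ f ∈ Sset x ν, ‖T f y0‖ = 1 := by
    intro f hf
    exact le_antisymm (le_trans (C0_norm_apply_le' _ y0) (hTnorm f hf).le) (hy0K ⟨f, hf⟩)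
  -- the convex set of values at y0
  set V : Set F := (fun f : Sset x ν => T f.1 y0) '' Set.univ with hV
  have hVconv : Convex ℝ V := by
    rintro v1 ⟨f, -, rfl⟩ v2 ⟨g, -, rfl⟩ a b ha hb hab
    have hc : a • f.1 + b • g.1 ∈ Sset x ν := Sset_comb_mem hν1 f.2 g.2 ha hb hab
    refine ⟨⟨_, hc⟩, Set.mem_univ _, ?_⟩
    show T (a • f.1 + b • g.1) y0 = a • T f.1 y0 + b • T g.1 y0
    rw [map_add, map_smul, map_smul]
    simp
  have hVne : V.Nonempty := ⟨T f0 y0, ⟨⟨f0, hf0S⟩, Set.mem_univ _, rfl⟩⟩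
  have hVs : ∀ v ∈ V, ‖v‖ = 1 := by
    rintro v ⟨f, -, rfl⟩
    exact hy0norm f.1 f.2
  obtain ⟨μ, hμ1, hμV⟩ := exists_support_functional' V hVconv hVne hVs
  have hμval : ∀ f ∈ Sset x ν, μ (T f y0) = 1 := by
    intro f hf
    exact hμV _ ⟨⟨f, hf⟩, Set.mem_univ _, rfl⟩
  have hQnu : y0 ∈ Qnu T x ν :=
    ⟨hSne, μ, hμ1, fun f hf => ⟨hμval f hf, hTnorm f hf⟩⟩
  constructor
  · refine ⟨y0, ?_⟩
    rw [Qset]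
    exact Set.mem_biUnion hν1 hQnu
  · exact ⟨ν, hν1, y0, μ, hμ1, hSne, hμval⟩
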